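/- arXiv:2305.17383 — 4 statements merged into one kernel-verified Lean document; each statement's English description precedes it below -/
import Mathlib

section
/- Let W be an n×n doubly stochastic matrix with strictly positive diagonal entries whose associated graph (edges where w_ij > 0) is undirected and connected, and let ρ_W be the spectral norm of W - (1/n)𝟙𝟙ᵀ. Then ρ_W < 1. -/
open Finset

lemma walk_exists_adj_ne' {V : Type*} {G : SimpleGraph V} {f : V → ℝ} :
    ∀ {a b : V}, G.Walk a b → f a ≠ f b → ∃ u v, G.Adj u v ∧ f u ≠ f v := by
  intro a b p
  induction p with
  | nil => intro h; exact absurd rfl h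
  | @cons u v w h p ih =>
    intro hne
    by_cases hc : f u = f v
    · exact ih (hc ▸ hne)
    · exact ⟨u, v, h, hc⟩

lemma row_identity' {n : ℕ} (w y : Fin n → ℝ) :
    ∑ j, ∑ k, w j * w k * (y j - y k) ^ 2 =
      (∑ j, w j * y j ^ 2) * (∑ k, w k) - 2 * (∑ j, w j * y j) ^ 2
        + (∑ j, w j) * (∑ k, w k * y k ^ 2) := by
  have h : ∀ j : Fin n, ∑ k, w j * w k * (y j - y k) ^ 2 =
      (w j * y j ^ 2) * (∑ k, w k) - (w j * y j) * (2 * ∑ k, w k * y k)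
        + w j * (∑ k, w k * y k ^ 2) := by
    intro j
    calc ∑ k, w j * w k * (y j - y k) ^ 2
        = ∑ k, ((w j * y j ^ 2) * w k - (w j * y j) * (2 * (w k * y k))
            + w j * (w k * y k ^ 2)) := Finset.sum_congr rfl fun k _ => by ring
      _ = _ := by
          rw [Finset.sum_add_distrib, Finset.sum_sub_distrib, ← Finset.mul_sum,
            ← Finset.mul_sum, ← Finset.mul_sum, ← Finset.mul_sum]
  rw [Finset.sum_congr rfl fun j _ => h j, Finset.sum_add_distrib, Finset.sum_sub_distrib,
    ← Finset.sum_mul, ← Finset.sum_mul, ← Finset.sum_mul]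
  ring

lemma key_lt {n : ℕ} (W : Matrix (Fin n) (Fin n) ℝ)
    (hnonneg : ∀ i j, 0 ≤ W i j)
    (hrow : ∀ i, ∑ j, W i j = 1)
    (hcol : ∀ j, ∑ i, W i j = 1)
    (hdiag : ∀ i, 0 < W i i)
    (hsym : ∀ i j, W i j = W j i)
    (hconn : (SimpleGraph.fromRel (fun i j : Fin n => 0 < W i j)).Connected)
    (y : Fin n → ℝ) (hy0 : ∑ i, y i = 0) (hy : y ≠ 0) :
    ∑ i, (∑ j, W i j * y j) ^ 2 < ∑ i, (y i) ^ 2 := by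
  -- y is not constant
  obtain ⟨a, ha⟩ : ∃ a, y a ≠ 0 := by
    by_contra h; push_neg at h; exact hy (funext h)
  obtain ⟨b, hb⟩ : ∃ b, y b ≠ y a := by
    by_contra h; push_neg at h
    apply ha
    have hsum : ∑ i, y i = ∑ _i : Fin n, y a := Finset.sum_congr rfl fun i _ => h i
    rw [hsum, Finset.sum_const, Finset.card_univ, Fintype.card_fin, nsmul_eq_mul] at hy0
    rcases mul_eq_zero.mp hy0 with h1 | h1
    · have hn : (0:ℕ) < n := Fin.pos a
      exact absurd h1 (by positivity)
    · exact h1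
  -- find an edge with differing values
  obtain ⟨p⟩ := hconn.preconnected a b
  obtain ⟨u, v, huv, hyuv⟩ := walk_exists_adj_ne' p (Ne.symm hb)
  have hWuv : 0 < W u v := by
    rcases huv with ⟨hne, h1 | h1⟩
    · exact h1
    · rw [hsym]; exact h1
  -- per-row deficit
  set D : Fin n → ℝ := fun i => ∑ j, W i j * y j ^ 2 - (∑ j, W i j * y j) ^ 2 with hD
  have hDid : ∀ i, D i = (1/2) * ∑ j, ∑ k, W i j * W i k * (y j - y k) ^ 2 := by
    intro i
    rw [row_identity' (fun j => W i j) y, hrow i]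
    simp [hD]
    ring
  have hDnonneg : ∀ i, 0 ≤ D i := by
    intro i
    rw [hDid i]
    have : 0 ≤ ∑ j, ∑ k, W i j * W i k * (y j - y k) ^ 2 :=
      Finset.sum_nonneg fun j _ => Finset.sum_nonneg fun k _ =>
        mul_nonneg (mul_nonneg (hnonneg i j) (hnonneg i k)) (sq_nonneg _)
    linarith
  have hDu : 0 < D u := by
    rw [hDid u]
    have hterm : 0 < W u v * W u u * (y v - y u) ^ 2 := by
      have h0 : y v - y u ≠ 0 := sub_ne_zero.mpr (Ne.symm hyuv)
      exact mul_pos (mul_pos hWuv (hdiag u)) (pow_two_pos_of_ne_zero h0)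
    have h1 : W u v * W u u * (y v - y u) ^ 2 ≤ ∑ k, W u v * W u k * (y v - y k) ^ 2 := by
      apply Finset.single_le_sum (f := fun k => W u v * W u k * (y v - y k) ^ 2)
        (fun k _ => mul_nonneg (mul_nonneg (hnonneg u v) (hnonneg u k)) (sq_nonneg _))
        (Finset.mem_univ u)
    have h2 : ∑ k, W u v * W u k * (y v - y k) ^ 2
        ≤ ∑ j, ∑ k, W u j * W u k * (y j - y k) ^ 2 := by
      apply Finset.single_le_sum (f := fun j => ∑ k, W u j * W u k * (y j - y k) ^ 2)
        (fun j _ => Finset.sum_nonneg fun k _ =>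
          mul_nonneg (mul_nonneg (hnonneg u j) (hnonneg u k)) (sq_nonneg _))
        (Finset.mem_univ v)
    linarith
  have hsumD : 0 < ∑ i, D i :=
    Finset.sum_pos' (fun i _ => hDnonneg i) ⟨u, Finset.mem_univ u, hDu⟩
  have hswap : ∑ i, ∑ j, W i j * y j ^ 2 = ∑ i, y i ^ 2 := by
    rw [Finset.sum_comm]
    refine Finset.sum_congr rfl fun j _ => ?_
    rw [← Finset.sum_mul, hcol j, one_mul]
  have : ∑ i, (∑ j, W i j * y j) ^ 2 = ∑ i, y i ^ 2 - ∑ i, D i := by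
    rw [← hswap, ← Finset.sum_sub_distrib]
    refine Finset.sum_congr rfl fun i _ => ?_
    simp [hD]
  linarith

theorem stmt_2 {n : ℕ} (hn : 0 < n) (W : Matrix (Fin n) (Fin n) ℝ)
    (hnonneg : ∀ i j, 0 ≤ W i j)
    (hrow : ∀ i, ∑ j, W i j = 1)
    (hcol : ∀ j, ∑ i, W i j = 1)
    (hdiag : ∀ i, 0 < W i i)
    (hsym : ∀ i j, W i j = W j i)
    (hconn : (SimpleGraph.fromRel (fun i j : Fin n => 0 < W i j)).Connected) :
    ‖Matrix.toEuclideanCLM (𝕜 := ℝ)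
        (W - (1 / (n : ℝ)) • Matrix.of (fun _ _ : Fin n => (1 : ℝ)))‖ < 1 := by
  set M : Matrix (Fin n) (Fin n) ℝ :=
    W - (1 / (n : ℝ)) • Matrix.of (fun _ _ : Fin n => (1 : ℝ)) with hM
  set T := Matrix.toEuclideanCLM (𝕜 := ℝ) M with hT
  have hnne : (n : ℝ) ≠ 0 := Nat.cast_ne_zero.mpr hn.ne'
  -- key pointwise strict inequality
  have hkey : ∀ x : Fin n → ℝ, x ≠ 0 → ∑ i, (M.mulVec x i) ^ 2 < ∑ i, (x i) ^ 2 := by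
    intro x hx
    set c : ℝ := (∑ j, x j) / n with hc
    set y : Fin n → ℝ := fun j => x j - c with hy
    have hnc : (n : ℝ) * c = ∑ j, x j := by
      rw [hc]; field_simp
    have hMmul : ∀ i, M.mulVec x i = ∑ j, W i j * y j := by
      intro i
      have h1 : M.mulVec x i = ∑ j, (W i j - 1 / n) * x j := by
        simp [Matrix.mulVec, dotProduct, hM, Matrix.sub_apply, Matrix.smul_apply]
      rw [h1]
      have h2 : ∑ j, (W i j - 1 / n) * x j
          = ∑ j, W i j * x j - (1 / n) * ∑ j, x j := by
        rw [Finset.mul_sum, ← Finset.sum_sub_distrib]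
        exact Finset.sum_congr rfl fun j _ => by ring
      have h3 : ∑ j, W i j * y j = ∑ j, W i j * x j - (∑ j, W i j) * c := by
        rw [Finset.sum_mul, ← Finset.sum_sub_distrib]
        exact Finset.sum_congr rfl fun j _ => by rw [hy]; ring
      rw [h2, h3, hrow i, one_mul, hc]
      field_simp
    have hysum : ∑ j, y j = 0 := by
      simp only [hy, Finset.sum_sub_distrib, Finset.sum_const, Finset.card_univ,
        Fintype.card_fin, nsmul_eq_mul]
      rw [← hnc]; ring
    have hyx : ∑ i, y i ^ 2 ≤ ∑ i, x i ^ 2 := by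
      have hexp : ∑ i, y i ^ 2
          = ∑ i, x i ^ 2 - 2 * c * (∑ i, x i) + n * c ^ 2 := by
        have : ∀ i : Fin n, y i ^ 2 = x i ^ 2 - 2 * c * x i + c ^ 2 := by
          intro i; rw [hy]; ring
        rw [Finset.sum_congr rfl fun i _ => this i, Finset.sum_add_distrib,
          Finset.sum_sub_distrib, Finset.sum_const, Finset.card_univ, Fintype.card_fin,
          nsmul_eq_mul, ← Finset.mul_sum]
      have hc2 : 0 ≤ (n : ℝ) * c ^ 2 := by positivity
      rw [hexp, ← hnc]
      nlinarith [hc2]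
    by_cases hy0 : y = 0
    · have hzero : ∀ i, M.mulVec x i = 0 := by
        intro i; rw [hMmul i, hy0]; simp
      have hxpos : 0 < ∑ i, x i ^ 2 := by
        obtain ⟨i0, hi0⟩ : ∃ i0, x i0 ≠ 0 := by
          by_contra h; push_neg at h; exact hx (funext h)
        exact Finset.sum_pos' (fun i _ => sq_nonneg _)
          ⟨i0, Finset.mem_univ i0, pow_two_pos_of_ne_zero hi0⟩
      calc ∑ i, (M.mulVec x i) ^ 2 = 0 := by
            refine Finset.sum_eq_zero fun i _ => ?_; rw [hzero i]; simp
        _ < ∑ i, x i ^ 2 := hxpos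
    · calc ∑ i, (M.mulVec x i) ^ 2 = ∑ i, (∑ j, W i j * y j) ^ 2 :=
            Finset.sum_congr rfl fun i _ => by rw [hMmul i]
        _ < ∑ i, y i ^ 2 :=
            key_lt W hnonneg hrow hcol hdiag hsym hconn y hysum hy0
        _ ≤ ∑ i, x i ^ 2 := hyx
  -- T z as mulVec
  have hTz : ∀ (z : EuclideanSpace ℝ (Fin n)) (i : Fin n), T z i = M.mulVec z i := by
    intro z i
    have h := congrFun (Matrix.ofLp_toEuclideanCLM (𝕜 := ℝ) M z) i
    exact h
  have hnormsq : ∀ z : EuclideanSpace ℝ (Fin n), ‖T z‖ ^ 2 = ∑ i, (M.mulVec z i) ^ 2 := by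
    intro z
    rw [EuclideanSpace.norm_eq, Real.sq_sqrt (Finset.sum_nonneg fun i _ => sq_nonneg _)]
    exact Finset.sum_congr rfl fun i _ => by rw [hTz z i, Real.norm_eq_abs, sq_abs]
  have hznormsq : ∀ z : EuclideanSpace ℝ (Fin n), ‖z‖ ^ 2 = ∑ i, (z i) ^ 2 := by
    intro z
    rw [EuclideanSpace.norm_eq, Real.sq_sqrt (Finset.sum_nonneg fun i _ => sq_nonneg _)]
    exact Finset.sum_congr rfl fun i _ => by rw [Real.norm_eq_abs, sq_abs]
  -- strict norm decrease
  have hlt : ∀ z : EuclideanSpace ℝ (Fin n), z ≠ 0 → ‖T z‖ < ‖z‖ := by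
    intro z hz
    have hz' : (z : Fin n → ℝ) ≠ 0 := by
      intro h
      exact hz (by ext i; exact congrFun h i)
    have h1 : ‖T z‖ ^ 2 < ‖z‖ ^ 2 := by
      rw [hnormsq z, hznormsq z]; exact hkey z hz'
    exact lt_of_pow_lt_pow_left₀ 2 (norm_nonneg z) h1
  -- attain the norm on the sphere
  have hnontriv : ∃ x : EuclideanSpace ℝ (Fin n), ‖x‖ = 1 := by
    refine ⟨EuclideanSpace.single ⟨0, hn⟩ (1 : ℝ), ?_⟩
    rw [EuclideanSpace.norm_single, norm_one]
  obtain ⟨e, he⟩ := hnontriv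
  have hsph : e ∈ Metric.sphere (0 : EuclideanSpace ℝ (Fin n)) 1 := by
    simpa [Metric.mem_sphere, dist_zero_right] using he
  obtain ⟨x₀, hx₀s, hmax⟩ :=
    (isCompact_sphere (0 : EuclideanSpace ℝ (Fin n)) 1).exists_isMaxOn ⟨e, hsph⟩
      ((continuous_norm.comp T.continuous).continuousOn)
  have hx₀ : ‖x₀‖ = 1 := by
    simpa [Metric.mem_sphere, dist_zero_right] using hx₀s
  have hbound : ‖T‖ ≤ ‖T x₀‖ := by
    apply ContinuousLinearMap.opNorm_le_bound _ (norm_nonneg _)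
    intro z
    by_cases hz : z = 0
    · simp [hz]
    · have hzn : ‖z‖ ≠ 0 := norm_ne_zero_iff.mpr hz
      set u : EuclideanSpace ℝ (Fin n) := ‖z‖⁻¹ • z with hu
      have huns : u ∈ Metric.sphere (0 : EuclideanSpace ℝ (Fin n)) 1 := by
        simp [hu, Metric.mem_sphere, dist_zero_right, norm_smul, abs_of_nonneg,
          inv_mul_cancel₀ hzn]
      have h2 : ‖T u‖ ≤ ‖T x₀‖ := hmax huns
      have h3 : T u = ‖z‖⁻¹ • T z := by rw [hu, map_smul]
      rw [h3, norm_smul, norm_inv, norm_norm] at h2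
      calc ‖T z‖ = ‖z‖ * (‖z‖⁻¹ * ‖T z‖) := by field_simp
        _ ≤ ‖z‖ * ‖T x₀‖ := by
            apply mul_le_mul_of_nonneg_left h2 (norm_nonneg z)
        _ = ‖T x₀‖ * ‖z‖ := by ring
  have hx₀ne : x₀ ≠ 0 := by
    intro h; rw [h, norm_zero] at hx₀; norm_num at hx₀
  calc ‖T‖ ≤ ‖T x₀‖ := hbound
    _ < ‖x₀‖ := hlt x₀ hx₀ne
    _ = 1 := hx₀
end

section
/- Under the DPPA iteration x_k(t+1) + η∇f_k(x_k(t+1)) = ∑_j w_kj x_j(t) with each f_k L-smooth and W doubly stochastic with consensus contraction factor ρ_W, the consensus error satisfies B_{t+1} ≤ ρ_W B_t + ηL B_{t+1} + ηL A_{t+1} + ηD, where D = max_i ‖∇f_i(x_*)‖, A_t = ‖x̄(t) - x_*‖, and B_t = (1/√n)‖x(t) - x̄(t)‖ (stacked vectors). -/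
open Finset

-- sqrt of sum of squared norms as a PiLp norm
lemma l2norm_eq {n : ℕ} {E : Type*} [SeminormedAddCommGroup E]
    (y : Fin n → E) :
    ‖(WithLp.equiv 2 (Fin n → E)).symm y‖ = Real.sqrt (∑ i, ‖y i‖ ^ 2) := by
  rw [PiLp.norm_eq_of_L2]
  rfl

-- Minkowski: sqrt(∑‖a+b‖²) ≤ sqrt(∑‖a‖²) + sqrt(∑‖b‖²)
lemma sqrt_sum_sq_add_le {n : ℕ} {E : Type*} [SeminormedAddCommGroup E]
    (a b : Fin n → E) :
    Real.sqrt (∑ i, ‖a i + b i‖ ^ 2)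
      ≤ Real.sqrt (∑ i, ‖a i‖ ^ 2) + Real.sqrt (∑ i, ‖b i‖ ^ 2) := by
  have := norm_add_le ((WithLp.equiv 2 (Fin n → E)).symm a)
    ((WithLp.equiv 2 (Fin n → E)).symm b)
  simpa [PiLp.norm_eq_of_L2] using this
  
-- monotonicity
lemma sqrt_sum_sq_mono {n : ℕ} (a b : Fin n → ℝ) (ha : ∀ i, 0 ≤ a i)
    (h : ∀ i, a i ≤ b i) :
    Real.sqrt (∑ i, a i ^ 2) ≤ Real.sqrt (∑ i, b i ^ 2) := by
  apply Real.sqrt_le_sqrt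
  apply Finset.sum_le_sum
  intro i _
  exact pow_le_pow_left₀ (ha i) (h i) 2

-- variance ≤ second moment
lemma var_le_sq {n : ℕ} (hn : 0 < n) {E : Type*} [NormedAddCommGroup E]
    [InnerProductSpace ℝ E] (g : Fin n → E) :
    ∑ k, ‖g k - (1 / (n : ℝ)) • ∑ j, g j‖ ^ 2 ≤ ∑ k, ‖g k‖ ^ 2 := by
  set m : E := (1 / (n : ℝ)) • ∑ j, g j with hm
  have hn' : (n : ℝ) ≠ 0 := Nat.cast_ne_zero.mpr hn.ne'
  have hsum : ∑ j, g j = (n : ℝ) • m := by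
    rw [hm, smul_smul]
    field_simp
    rw [one_smul]
  have hinner : ∑ k, (inner ℝ (g k) m : ℝ) = (n : ℝ) * ‖m‖ ^ 2 := by
    rw [← sum_inner, hsum, real_inner_smul_left, real_inner_self_eq_norm_sq]
  have expand : ∑ k, ‖g k - m‖ ^ 2
      = ∑ k, ‖g k‖ ^ 2 - 2 * ((n : ℝ) * ‖m‖ ^ 2) + (n : ℝ) * ‖m‖ ^ 2 := by
    have : ∀ k : Fin n, ‖g k - m‖ ^ 2 = ‖g k‖ ^ 2 - 2 * (inner ℝ (g k) m : ℝ) + ‖m‖ ^ 2 :=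
      fun k => norm_sub_sq_real (g k) m
    simp_rw [this]
    rw [Finset.sum_add_distrib, Finset.sum_sub_distrib, ← Finset.mul_sum, hinner,
      Finset.sum_const, Finset.card_fin, nsmul_eq_mul]
  rw [expand]
  have hnn : (0:ℝ) ≤ (n:ℝ) := Nat.cast_nonneg n
  nlinarith [sq_nonneg ‖m‖, mul_nonneg hnn (sq_nonneg ‖m‖)]

set_option maxHeartbeats 1600000 in

theorem stmt_5 {n d : ℕ} (hn : 0 < n)
    (f : Fin n → EuclideanSpace ℝ (Fin d) → ℝ)
    (f' : Fin n → EuclideanSpace ℝ (Fin d) → EuclideanSpace ℝ (Fin d))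
    (hdiff : ∀ k x, HasGradientAt (f k) (f' k x) x)
    (L η ρ D : ℝ) (hL : 0 < L) (hη : 0 < η) (hρpos : 0 ≤ ρ)
    (hsmooth : ∀ k (u v : EuclideanSpace ℝ (Fin d)), ‖f' k u - f' k v‖ ≤ L * ‖u - v‖)
    (W : Matrix (Fin n) (Fin n) ℝ)
    (hnonneg : ∀ i j, 0 ≤ W i j)
    (hrow : ∀ i, ∑ j, W i j = 1)
    (hcol : ∀ j, ∑ i, W i j = 1)
    (hcontr : ∀ y : Fin n → EuclideanSpace ℝ (Fin d),
      ∑ i, ‖∑ j, W i j • (y j - (1 / (n : ℝ)) • ∑ k, y k)‖ ^ 2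
        ≤ ρ ^ 2 * ∑ i, ‖y i - (1 / (n : ℝ)) • ∑ k, y k‖ ^ 2)
    (x : ℕ → Fin n → EuclideanSpace ℝ (Fin d))
    (hiter : ∀ t k, x (t + 1) k + η • f' k (x (t + 1) k) = ∑ j, W k j • x t j)
    (xstar : EuclideanSpace ℝ (Fin d))
    (hmin : ∑ k, f' k xstar = 0)
    (hD : ∀ i, ‖f' i xstar‖ ≤ D)
    (A B : ℕ → ℝ)
    (hA : ∀ t, A t = ‖(1 / (n : ℝ)) • (∑ k, x t k) - xstar‖)
    (hB : ∀ t, B t = Real.sqrt ((1 / (n : ℝ)) *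
        ∑ k, ‖x t k - (1 / (n : ℝ)) • (∑ j, x t j)‖ ^ 2)) :
    ∀ t, B (t + 1) ≤ ρ * B t + η * L * B (t + 1) + η * L * A (t + 1) + η * D := by
  intro t
  have hn' : (n : ℝ) ≠ 0 := Nat.cast_ne_zero.mpr hn.ne'
  have hsn : (0:ℝ) < Real.sqrt n := Real.sqrt_pos.mpr (Nat.cast_pos.mpr hn)
  set c1 : EuclideanSpace ℝ (Fin d) := (1/(n:ℝ)) • ∑ j, x t j with hc1
  set c2 : EuclideanSpace ℝ (Fin d) := (1/(n:ℝ)) • ∑ j, x (t+1) j with hc2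
  set g : Fin n → EuclideanSpace ℝ (Fin d) := fun k => f' k (x (t+1) k) with hg
  set m : EuclideanSpace ℝ (Fin d) := (1/(n:ℝ)) • ∑ k, g k with hm
  -- recursion for each coordinate
  have hx : ∀ k, x (t+1) k = ∑ j, W k j • x t j - η • g k := by
    intro k
    have := hiter t k
    rw [← this]; abel
  -- mean recursion
  have hc : c2 = c1 - η • m := by
    have hsum : ∑ j, x (t+1) j = ∑ j, x t j - η • ∑ k, g k := by
      calc ∑ j, x (t+1) j = ∑ k, (∑ j, W k j • x t j - η • g k) := by
            exact Finset.sum_congr rfl fun k _ => hx k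
        _ = (∑ k, ∑ j, W k j • x t j) - ∑ k, η • g k := by
            rw [Finset.sum_sub_distrib]
        _ = (∑ j, (∑ k, W k j) • x t j) - η • ∑ k, g k := by
            rw [Finset.sum_comm, Finset.smul_sum]
            simp [Finset.sum_smul]
        _ = ∑ j, x t j - η • ∑ k, g k := by
            simp only [hcol, one_smul]
    rw [hc2, hsum, smul_sub, ← hc1, hm, smul_smul, smul_smul, mul_comm]
  -- weighted-average identity
  have hWc : ∀ k, ∑ j, W k j • (x t j - c1) = x (t+1) k + η • g k - c1 := by
    intro k
    have h1 : ∑ j, W k j • (x t j - c1)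
        = ∑ j, W k j • x t j - (∑ j, W k j) • c1 := by
      simp [smul_sub, Finset.sum_sub_distrib, Finset.sum_smul]
    rw [h1, hrow k, one_smul, ← hiter t k]
  have key : ∀ k, x (t+1) k - c2
      = (∑ j, W k j • (x t j - c1)) + (-(η • (g k - m))) := by
    intro k
    rw [hWc k, hc, smul_sub]
    abel
  -- norms
  set S2 : ℝ := Real.sqrt (∑ k, ‖x (t+1) k - c2‖^2) with hS2
  set S1 : ℝ := Real.sqrt (∑ k, ‖x t k - c1‖^2) with hS1
  have hnormB1 : Real.sqrt (n:ℝ) * B t = S1 := by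
    rw [hB t, ← Real.sqrt_mul (Nat.cast_nonneg n), hS1, ← hc1]
    congr 1
    field_simp
  have hnormB2 : Real.sqrt (n:ℝ) * B (t+1) = S2 := by
    rw [hB (t+1), ← Real.sqrt_mul (Nat.cast_nonneg n), hS2, ← hc2]
    congr 1
    field_simp
  -- step 1
  have step1 : S2 ≤ ρ * S1 + η * Real.sqrt (∑ k, ‖g k‖^2) := by
    have h1 : S2 ≤ Real.sqrt (∑ k, ‖∑ j, W k j • (x t j - c1)‖^2)
        + Real.sqrt (∑ k, ‖-(η • (g k - m))‖^2) := by
      rw [hS2]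
      calc Real.sqrt (∑ k, ‖x (t+1) k - c2‖^2)
          = Real.sqrt (∑ k, ‖(∑ j, W k j • (x t j - c1)) + (-(η • (g k - m)))‖^2) := by
            congr 1; exact Finset.sum_congr rfl fun k _ => by rw [key k]
        _ ≤ _ := sqrt_sum_sq_add_le _ _
    have h2 : Real.sqrt (∑ k, ‖∑ j, W k j • (x t j - c1)‖^2) ≤ ρ * S1 := by
      have := hcontr (x t)
      rw [← hc1] at this
      calc Real.sqrt (∑ k, ‖∑ j, W k j • (x t j - c1)‖^2)
          ≤ Real.sqrt (ρ^2 * ∑ i, ‖x t i - c1‖^2) := Real.sqrt_le_sqrt this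
        _ = ρ * S1 := by
            rw [Real.sqrt_mul (sq_nonneg ρ), Real.sqrt_sq hρpos, hS1]
    have h3 : Real.sqrt (∑ k, ‖-(η • (g k - m))‖^2) ≤ η * Real.sqrt (∑ k, ‖g k‖^2) := by
      have e : ∀ k : Fin n, ‖-(η • (g k - m))‖^2 = η^2 * ‖g k - m‖^2 := by
        intro k
        rw [norm_neg, norm_smul, Real.norm_eq_abs, abs_of_pos hη, mul_pow]
      calc Real.sqrt (∑ k, ‖-(η • (g k - m))‖^2)
          = Real.sqrt (η^2 * ∑ k, ‖g k - m‖^2) := by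
            rw [show (∑ k, ‖-(η • (g k - m))‖^2) = η^2 * ∑ k, ‖g k - m‖^2 by
              rw [Finset.mul_sum]; exact Finset.sum_congr rfl fun k _ => e k]
        _ = η * Real.sqrt (∑ k, ‖g k - m‖^2) := by
            rw [Real.sqrt_mul (sq_nonneg η), Real.sqrt_sq hη.le]
        _ ≤ η * Real.sqrt (∑ k, ‖g k‖^2) := by
            apply mul_le_mul_of_nonneg_left _ hη.le
            exact Real.sqrt_le_sqrt (var_le_sq hn g)
    linarith
  -- step 2
  have hA2 : A (t+1) = ‖c2 - xstar‖ := hA (t+1)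
  have hDnn : 0 ≤ D := le_trans (norm_nonneg _) (hD ⟨0, hn⟩)
  have hAnn : 0 ≤ A (t+1) := by rw [hA2]; exact norm_nonneg _
  set C : ℝ := L * A (t+1) + D with hC
  have hCnn : 0 ≤ C := by positivity
  have step2 : Real.sqrt (∑ k, ‖g k‖^2) ≤ L * S2 + Real.sqrt (n:ℝ) * C := by
    have pt : ∀ k, ‖g k‖ ≤ L * ‖x (t+1) k - c2‖ + C := by
      intro k
      have h1 : ‖g k‖ ≤ ‖g k - f' k xstar‖ + ‖f' k xstar‖ := by
        simpa using norm_add_le (g k - f' k xstar) (f' k xstar)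
      have h2 : ‖g k - f' k xstar‖ ≤ L * ‖x (t+1) k - xstar‖ := hsmooth k _ _
      have h3 : ‖x (t+1) k - xstar‖ ≤ ‖x (t+1) k - c2‖ + ‖c2 - xstar‖ :=
        norm_sub_le_norm_sub_add_norm_sub _ _ _
      have h4 := hD k
      rw [hC, hA2]
      nlinarith
    calc Real.sqrt (∑ k, ‖g k‖^2)
        ≤ Real.sqrt (∑ k, (L * ‖x (t+1) k - c2‖ + C)^2) :=
          sqrt_sum_sq_mono _ _ (fun k => norm_nonneg _) pt
      _ = Real.sqrt (∑ k, ‖(L * ‖x (t+1) k - c2‖) + C‖^2) := by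
          congr 1
          exact Finset.sum_congr rfl fun k _ => by rw [Real.norm_eq_abs, sq_abs]
      _ ≤ Real.sqrt (∑ k : Fin n, ‖L * ‖x (t+1) k - c2‖‖^2)
          + Real.sqrt (∑ k : Fin n, ‖C‖^2) :=
          sqrt_sum_sq_add_le (fun k => L * ‖x (t+1) k - c2‖) (fun _ => C)
      _ = L * S2 + Real.sqrt (n:ℝ) * C := by
          congr 1
          · have : ∀ k : Fin n, ‖L * ‖x (t+1) k - c2‖‖^2 = L^2 * ‖x (t+1) k - c2‖^2 := by
              intro k
              rw [Real.norm_eq_abs, abs_of_nonneg (by positivity), mul_pow]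
            rw [Finset.sum_congr rfl fun k _ => this k, ← Finset.mul_sum,
              Real.sqrt_mul (sq_nonneg L), Real.sqrt_sq hL.le, hS2]
          · rw [Finset.sum_const, Finset.card_fin, nsmul_eq_mul, Real.norm_eq_abs,
              sq_abs, Real.sqrt_mul (Nat.cast_nonneg n), Real.sqrt_sq hCnn]
  -- combine
  have final : Real.sqrt (n:ℝ) * B (t+1)
      ≤ Real.sqrt (n:ℝ) * (ρ * B t + η * L * B (t+1) + η * L * A (t+1) + η * D) := by
    have hmul2 : η * Real.sqrt (∑ k, ‖g k‖^2)
        ≤ η * L * S2 + Real.sqrt (n:ℝ) * (η * C) := by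
      calc η * Real.sqrt (∑ k, ‖g k‖^2)
          ≤ η * (L * S2 + Real.sqrt (n:ℝ) * C) :=
            mul_le_mul_of_nonneg_left step2 hη.le
        _ = _ := by ring
    have : S2 ≤ ρ * S1 + η * L * S2 + Real.sqrt (n:ℝ) * (η * C) := by
      linarith
    rw [hnormB2]
    calc S2 ≤ ρ * S1 + η * L * S2 + Real.sqrt (n:ℝ) * (η * C) := this
      _ = _ := by rw [← hnormB1, ← hnormB2, hC]; ring
  exact le_of_mul_le_mul_left final hsn
end

section
/- Let α, L, η > 0 with 0 < ρ_W < 1 and suppose the nonnegative sequences (A_t), (B_t) satisfy (1+ηα)A_{t+1} ≤ A_t + ηL B_{t+1} and B_{t+1} ≤ ρ_W B_t + ηL B_{t+1} + ηL A_{t+1} + ηD for all t ≥ 0, for some D ≥ 0. If the stepsize satisfies η²(α² + αL) + η(α + L - (1-ρ_W)α²/L) < (1-ρ_W)α/L, then A_t ≤ R and B_t ≤ (α/L)R for all t ≥ 0, where R = max{A_0, (L/α)B_0, (L/α)B_1, ηD / ((α/L)(1 - ηL - η²L²/(1+ηα)) - (α/L)ρ_W - ηL/(1+ηα))}. -/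
theorem stmt_8 (α L η ρ D : ℝ) (hα : 0 < α) (hL : 0 < L) (hη : 0 < η)
    (hρ : 0 < ρ) (hρ1 : ρ < 1) (hD : 0 ≤ D)
    (A B : ℕ → ℝ) (hAnonneg : ∀ t, 0 ≤ A t) (hBnonneg : ∀ t, 0 ≤ B t)
    (hrec1 : ∀ t, (1 + η * α) * A (t + 1) ≤ A t + η * L * B (t + 1))
    (hrec2 : ∀ t, B (t + 1) ≤ ρ * B t + η * L * B (t + 1) + η * L * A (t + 1) + η * D)
    (hstep : η ^ 2 * (α ^ 2 + α * L) + η * (α + L - (1 - ρ) * α ^ 2 / L)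
        < (1 - ρ) * α / L)
    (R : ℝ)
    (hR : R = max (max (A 0) ((L / α) * B 0)) (max ((L / α) * B 1)
        (η * D / ((α / L) * (1 - η * L - η ^ 2 * L ^ 2 / (1 + η * α))
            - (α / L) * ρ - η * L / (1 + η * α))))) :
    ∀ t, A t ≤ R ∧ B t ≤ (α / L) * R := by
  have hu : 0 < 1 + η * α := by positivity
  have hLu : 0 < L * (1 + η * α) := by positivity
  set Den := (α / L) * (1 - η * L - η ^ 2 * L ^ 2 / (1 + η * α))
      - (α / L) * ρ - η * L / (1 + η * α) with hDen_def
  have hpoly : Den * (L * (1 + η * α))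
      = α * (1 - ρ) * (1 + η * α) - α * η * L * (1 + η * α) - α * η ^ 2 * L ^ 2
        - η * L ^ 2 := by
    rw [hDen_def]
    field_simp
    ring
  -- cleared version of the stepsize condition
  have hstep' : η ^ 2 * (α ^ 2 + α * L) * L + η * (α * L + L ^ 2) - η * (1 - ρ) * α ^ 2
      < (1 - ρ) * α := by
    have h := mul_lt_mul_of_pos_right hstep hL
    have h1 : (1 - ρ) * α ^ 2 / L * L = (1 - ρ) * α ^ 2 := by field_simp
    have h2 : (1 - ρ) * α / L * L = (1 - ρ) * α := by field_simp
    nlinarith [h]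
  have hpolypos : 0 < α * (1 - ρ) * (1 + η * α) - α * η * L * (1 + η * α)
      - α * η ^ 2 * L ^ 2 - η * L ^ 2 := by nlinarith [hstep']
  have hDenpos : 0 < Den := by
    nlinarith [hpoly, hpolypos, hLu]
  have hRD : η * D ≤ R * Den := by
    have hle : η * D / Den ≤ R := by
      rw [hR]; exact le_trans (le_max_right _ _) (le_max_right _ _)
    exact (div_le_iff₀ hDenpos).mp hle
  have hDLu : η * D * (L * (1 + η * α))
      ≤ R * (α * (1 - ρ) * (1 + η * α) - α * η * L * (1 + η * α) - α * η ^ 2 * L ^ 2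
        - η * L ^ 2) := by
    have h := mul_le_mul_of_nonneg_right hRD hLu.le
    calc η * D * (L * (1 + η * α)) ≤ R * Den * (L * (1 + η * α)) := h
      _ = _ := by rw [mul_assoc, hpoly]
  have hP : 0 < (1 + η * α) - η * L * (1 + η * α) - η ^ 2 * L ^ 2 := by
    nlinarith [hpolypos, mul_pos hα (mul_pos hρ hu), mul_pos hη (mul_pos hL hL), hα]
  intro t
  induction t with
  | zero =>
    constructor
    · rw [hR]; exact le_trans (le_max_left _ _) (le_max_left _ _)
    · have h : (L / α) * B 0 ≤ R := by
        rw [hR]; exact le_trans (le_max_right _ _) (le_max_left _ _)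
      have hc : (0:ℝ) ≤ α / L := by positivity
      calc B 0 = (α / L) * ((L / α) * B 0) := by field_simp
        _ ≤ (α / L) * R := mul_le_mul_of_nonneg_left h hc
  | succ t ih =>
    have hr1 := hrec1 t
    have hr2 := hrec2 t
    have h1 : B (t + 1) * ((1 + η * α) - η * L * (1 + η * α) - η ^ 2 * L ^ 2)
        ≤ ρ * (1 + η * α) * B t + η * L * A t + η * D * (1 + η * α) := by
      linarith [mul_le_mul_of_nonneg_left hr2 hu.le,
        mul_le_mul_of_nonneg_left hr1 (by positivity : (0:ℝ) ≤ η * L)]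
    have hBt : L * B t ≤ α * R := by
      calc L * B t ≤ L * ((α / L) * R) := mul_le_mul_of_nonneg_left ih.2 hL.le
        _ = α * R := by field_simp
    have h2 : (L * B (t + 1)) * ((1 + η * α) - η * L * (1 + η * α) - η ^ 2 * L ^ 2)
        ≤ (α * R) * ((1 + η * α) - η * L * (1 + η * α) - η ^ 2 * L ^ 2) := by
      linarith [mul_le_mul_of_nonneg_right h1 hL.le,
        mul_le_mul_of_nonneg_left hBt (by positivity : (0:ℝ) ≤ ρ * (1 + η * α)),
        mul_le_mul_of_nonneg_left ih.1 (by positivity : (0:ℝ) ≤ η * L ^ 2), hDLu]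
    have h3 : L * B (t + 1) ≤ α * R := le_of_mul_le_mul_right h2 hP
    have hB1 : B (t + 1) ≤ (α / L) * R := by
      rw [div_mul_eq_mul_div, le_div_iff₀ hL]; linarith
    refine ⟨?_, hB1⟩
    have h4 : η * L * B (t + 1) ≤ η * α * R := by
      calc η * L * B (t + 1) ≤ η * L * ((α / L) * R) :=
            mul_le_mul_of_nonneg_left hB1 (by positivity)
        _ = η * α * R := by field_simp
    have h5 : (1 + η * α) * A (t + 1) ≤ (1 + η * α) * R := by linarith
    exact le_of_mul_le_mul_left h5 hu
end

section
/- Suppose nonnegative sequences (A_t), (B_t) satisfy (1+ηα)A_{t+1} ≤ A_t + ηL B_{t+1} and B_t ≤ ρ^t B_0 + (η/(1-ρ))C for all t, where η, α, L, C > 0 and ρ ∈ (0,1). Then A_t ≤ A_0/(1+ηα)^t + (tηL B_0 ρ/(1+ηα)) max{ρ, 1/(1+ηα)}^{t-1} + ηL C/(α(1-ρ)) for all t ≥ 0. -/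
theorem stmt_12 (η α L C ρ : ℝ) (hη : 0 < η) (hα : 0 < α) (hL : 0 < L)
    (hC : 0 < C) (hρ0 : 0 < ρ) (hρ1 : ρ < 1)
    (A B : ℕ → ℝ) (hAnonneg : ∀ t, 0 ≤ A t) (hBnonneg : ∀ t, 0 ≤ B t)
    (hrec : ∀ t, (1 + η * α) * A (t + 1) ≤ A t + η * L * B (t + 1))
    (hBbound : ∀ t, B t ≤ ρ ^ t * B 0 + (η / (1 - ρ)) * C) :
    ∀ t, A t ≤ A 0 / (1 + η * α) ^ t
      + ((t : ℝ) * η * L * B 0 * ρ / (1 + η * α)) * max ρ (1 / (1 + η * α)) ^ (t - 1)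
      + η * L * C / (α * (1 - ρ)) := by
  have hP : (1:ℝ) < 1 + η * α := by nlinarith
  have hP0 : (0:ℝ) < 1 + η * α := by linarith
  have hρ1' : (0:ℝ) < 1 - ρ := by linarith
  set r := max ρ (1 / (1 + η * α)) with hrdef
  have hrρ : ρ ≤ r := le_max_left _ _
  have hrq : 1 / (1 + η * α) ≤ r := le_max_right _ _
  have hr0 : (0:ℝ) < r := lt_of_lt_of_le hρ0 hrρ
  have hK : (0:ℝ) < η * L * C / (α * (1 - ρ)) := by positivity
  have hB0 : 0 ≤ B 0 := hBnonneg 0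
  intro t
  induction t with
  | zero =>
    simp
    linarith
  | succ n ih =>
    have hBn1 := hBnonneg (n + 1)
    have hηL : (0:ℝ) < η * L := mul_pos hη hL
    have h1 : (1 + η * α) * A (n + 1)
        ≤ A n + η * L * (ρ ^ (n + 1) * B 0 + η / (1 - ρ) * C) := by
      have h2 := mul_le_mul_of_nonneg_left (hBbound (n + 1)) hηL.le
      have h3 := hrec n
      linarith
    have hmid : ((n:ℝ)) / (1 + η * α) * r ^ (n - 1) + ρ ^ n ≤ ((n:ℝ) + 1) * r ^ n := by
      cases n with
      | zero => simp
      | succ s =>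
        have hpow : ρ ^ (s + 1) ≤ r ^ (s + 1) := pow_le_pow_left₀ hρ0.le hrρ (s + 1)
        have hrs : (0:ℝ) ≤ r ^ s := pow_nonneg hr0.le s
        have hq : 1 / (1 + η * α) * r ^ s ≤ r * r ^ s :=
          mul_le_mul_of_nonneg_right hrq hrs
        have hs0 : (0:ℝ) ≤ (s:ℝ) + 1 := by positivity
        simp only [Nat.add_sub_cancel, Nat.cast_add, Nat.cast_one]
        have hq3 : ((s:ℝ) + 1) / (1 + η * α) * r ^ s ≤ ((s:ℝ) + 1) * r ^ (s + 1) := by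
          rw [pow_succ]
          calc ((s:ℝ) + 1) / (1 + η * α) * r ^ s
              = ((s:ℝ) + 1) * (1 / (1 + η * α) * r ^ s) := by ring
            _ ≤ ((s:ℝ) + 1) * (r ^ s * r) := by
                have hin : 1 / (1 + η * α) * r ^ s ≤ r ^ s * r := by linarith [hq]
                exact mul_le_mul_of_nonneg_left hin hs0
        linarith [hpow, hq3, pow_nonneg hr0.le (s + 1)]
    have hcoef : (0:ℝ) ≤ η * L * B 0 * ρ :=
      mul_nonneg (mul_nonneg (mul_nonneg hη.le hL.le) hB0) hρ0.le
    have hmul := mul_le_mul_of_nonneg_left hmid hcoef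
    have e1 : (1 + η * α) * (A 0 / (1 + η * α) ^ (n + 1)) = A 0 / (1 + η * α) ^ n := by
      rw [pow_succ]; field_simp
    have e2 : (1 + η * α) * (((n:ℝ) + 1) * η * L * B 0 * ρ / (1 + η * α) * r ^ n)
        = ((n:ℝ) + 1) * η * L * B 0 * ρ * r ^ n := by
      field_simp
    have e3 : (1 + η * α) * (η * L * C / (α * (1 - ρ)))
        = η * L * C / (α * (1 - ρ)) + η * L * (η / (1 - ρ) * C) := by
      field_simp
    have key : A n + η * L * (ρ ^ (n + 1) * B 0 + η / (1 - ρ) * C)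
        ≤ (1 + η * α) * (A 0 / (1 + η * α) ^ (n + 1)
          + ((n:ℝ) + 1) * η * L * B 0 * ρ / (1 + η * α) * r ^ n
          + η * L * C / (α * (1 - ρ))) := by
      rw [pow_succ ρ n, show (1 + η * α) * (A 0 / (1 + η * α) ^ (n + 1)
          + ((n:ℝ) + 1) * η * L * B 0 * ρ / (1 + η * α) * r ^ n
          + η * L * C / (α * (1 - ρ)))
        = (1 + η * α) * (A 0 / (1 + η * α) ^ (n + 1))
          + (1 + η * α) * (((n:ℝ) + 1) * η * L * B 0 * ρ / (1 + η * α) * r ^ n)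
          + (1 + η * α) * (η * L * C / (α * (1 - ρ))) from by ring, e1, e2, e3]
      ring_nf at ih hmul ⊢
      linarith [ih, hmul]
    have h5 : (1 + η * α) * A (n + 1)
        ≤ (1 + η * α) * (A 0 / (1 + η * α) ^ (n + 1)
          + ((n:ℝ) + 1) * η * L * B 0 * ρ / (1 + η * α) * r ^ n
          + η * L * C / (α * (1 - ρ))) := h1.trans key
    have h6 := le_of_mul_le_mul_left h5 hP0
    simp only [Nat.add_sub_cancel]
    push_cast
    linarith [h6]
end
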